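/- Let C assign a rational number C(m; d) to each pair of a finite tuple m of positive integers and an integer d ≥ 1, with C((2,2,3); 1) = 1. Suppose F, assigning a rational number F(m; d) to each such pair (with m possibly empty), satisfies: F is symmetric in the entries of m; the divisor relation F((1)⌢m; d) = d·F(m; d); F(m; d) = 0 whenever some entry of m is ≥ 4; F(m; d) = 0 whenever d ≡ k_d(m) (mod 2); recursions (R1) and (R2) with complex input C at all admissible (d, m); and F((3); 1) = −1. Then F((2); 1) = 0, F((2,2); 1) = −1, F((3,1); 1) = −1, and F((); 1) = 1. -/

import Mathlib

open Finset

/-- Binomial coefficient `C(n,k)` as a rational number, with the convention that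
`C(n,k) = 0` whenever `k < 0` or `k > n`. -/
def binom (n k : ℤ) : ℚ :=
  if 0 ≤ k ∧ k ≤ n then (n.toNat.choose k.toNat : ℚ) else 0

/-- Pairs `(d₀, d')` of positive integers with `d₀ + 2d' = d`. -/
def pairsHalf (d : ℕ) : Finset (ℕ × ℕ) :=
  (Finset.range (d + 1) ×ˢ Finset.range (d + 1)).filter
    fun p => 1 ≤ p.1 ∧ 1 ≤ p.2 ∧ p.1 + 2 * p.2 = d

/-- Pairs `(d₁, d₂)` of positive integers with `d₁ + d₂ = d`. -/
def pairsSum (d : ℕ) : Finset (ℕ × ℕ) :=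
  (Finset.HasAntidiagonal.antidiagonal d).filter fun p => 1 ≤ p.1 ∧ 1 ≤ p.2

/-- The subtuple of a tuple `m` indexed (in increasing order) by a set `S`
of positions. -/
def subt {α : Type*} (m : List α) (S : Finset (Fin m.length)) : List α :=
  (S.sort (· ≤ ·)).map m.get

/-- All entries of the tuple `m` are positive integers. -/
def posl (m : List ℕ) : Prop := ∀ x ∈ m, 0 < x

/-- For a degree `d` and a tuple `m = (m₁,…,m_l)`, the number
`k_d(m) = 2d + l − (m₁ + ⋯ + m_l)`. -/
def kd (d : ℕ) (m : List ℕ) : ℤ :=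
  2 * (d : ℤ) + m.length - (m.sum : ℤ)

/-- The term `T₀ = −2^{l−2} d C(m⌢(3); d/2)` if `d` is even and `k_d(m) = 2`,
and `0` otherwise; the power `2^{l−2}` is taken in `ℚ`. -/
def TP3 (C : List ℕ → ℕ → ℚ) (d : ℕ) (m : List ℕ) : ℚ :=
  if Even d ∧ kd d m = 2 then
    -((2 : ℚ) ^ ((m.length : ℤ) - 2)) * (d : ℚ) * C (m ++ [3]) (d / 2)
  else 0

/-- The WDVV-type recursion (R1) for the real invariants of `(ℙ³,τ₃)` at
`(d, m)` with `m = x :: t`:  the sums over `(I,J) ∈ P(l)` are encoded by the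
subsets `S` of the positions of `t` that are placed in `I` (so `m_I = x :: t_S`,
`m_J = t_{Sᶜ}` and `|I| = |S| + 1`). -/
def R1 (C F : List ℕ → ℕ → ℚ) (d : ℕ) (x : ℕ) (t : List ℕ) : Prop :=
  F ((x + 1) :: t) d =
    TP3 C d (x :: t)
    - ∑ p ∈ pairsHalf d, (p.2 : ℚ) *
        ∑ S : Finset (Fin t.length), (2 : ℚ) ^ S.card *
          ∑ i ∈ Finset.Icc 1 2,
            C ((x :: subt t S) ++ [i]) p.2 * F ((3 - i) :: subt t Sᶜ) p.1
    + ∑ q ∈ pairsSum d,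
        ∑ S : Finset (Fin t.length),
          ((q.2 : ℚ) * binom (kd d (x :: t) - 2) (kd q.1 (x :: subt t S) - 1)
            - (q.1 : ℚ) * binom (kd d (x :: t) - 2) (kd q.1 (x :: subt t S)))
          * F (x :: subt t S) q.1 * F (subt t Sᶜ) q.2

/-- The WDVV-type recursion (R2) for the real invariants of `(ℙ³,τ₃)` at
`(d, m)` with `m = x :: y :: t`: the sums over `(I,J) ∈ P_{;2}(l)` are encoded
by the subsets `S` of the positions of `t` placed in `I` (so `m_I = x :: t_S`,
`m_J = y :: t_{Sᶜ}`, `|I| = |S| + 1` and `|J| = |Sᶜ| + 1`). -/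
def R2 (C F : List ℕ → ℕ → ℚ) (d : ℕ) (x y : ℕ) (t : List ℕ) : Prop :=
  F (x :: (y + 1) :: t) d =
    F ((x + 1) :: y :: t) d
    + ∑ p ∈ pairsHalf d, (p.2 : ℚ) *
        ∑ S : Finset (Fin t.length),
          ∑ i ∈ Finset.Icc 1 2,
            ((2 : ℚ) ^ S.card * C ((x :: subt t S) ++ [i]) p.2
                * F ((3 - i) :: y :: subt t Sᶜ) p.1
              - (2 : ℚ) ^ (Sᶜ : Finset (Fin t.length)).card
                * C ((y :: subt t Sᶜ) ++ [3 - i]) p.2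
                * F (i :: x :: subt t S) p.1)
    + ∑ q ∈ pairsSum d,
        ∑ S : Finset (Fin t.length),
          ((q.1 : ℚ) * binom (kd d (x :: y :: t) - 1) (kd q.1 (x :: subt t S))
            - (q.2 : ℚ) * binom (kd d (x :: y :: t) - 1) (kd q.2 (y :: subt t Sᶜ)))
          * F (x :: subt t S) q.1 * F (y :: subt t Sᶜ) q.2

/-- The WDVV-type relations for `(ℙ³,τ₃)` together with the single input
`⟨3⟩₁ = −1` determine the degree 1 real invariants. -/
theorem stmt_14 (C F : List ℕ → ℕ → ℚ)
    (hC : C [2, 2, 3] 1 = 1)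
    (hsym : ∀ d : ℕ, 1 ≤ d → ∀ m m' : List ℕ, posl m → m.Perm m' → F m d = F m' d)
    (hdiv : ∀ d : ℕ, 1 ≤ d → ∀ m : List ℕ, posl m → F (1 :: m) d = (d : ℚ) * F m d)
    (hbig : ∀ d : ℕ, 1 ≤ d → ∀ m : List ℕ, posl m → (∃ x ∈ m, 4 ≤ x) → F m d = 0)
    (hpar : ∀ d : ℕ, 1 ≤ d → ∀ m : List ℕ, posl m →
      (d : ℤ) % 2 = kd d m % 2 → F m d = 0)
    (hR1 : ∀ d : ℕ, 1 ≤ d → ∀ (x : ℕ) (t : List ℕ), posl (x :: t) →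
      2 ≤ kd d (x :: t) → R1 C F d x t)
    (hR2 : ∀ d : ℕ, 1 ≤ d → ∀ (x y : ℕ) (t : List ℕ), posl (x :: y :: t) →
      1 ≤ kd d (x :: y :: t) → R2 C F d x y t)
    (h31 : F [3] 1 = -1) :
    F [2] 1 = 0 ∧ F [2, 2] 1 = -1 ∧ F [3, 1] 1 = -1 ∧ F [] 1 = 1 := by
  have pos0 : posl ([] : List ℕ) := by intro x hx; simp at hx
  have pH1 : pairsHalf 1 = ∅ := by decide
  have pH2 : pairsHalf 2 = ∅ := by decide
  have pS1 : pairsSum 1 = ∅ := by decide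
  have pS2 : pairsSum 2 = {(1,1)} := by decide
  have h2 : F [2] 1 = 0 := hpar 1 le_rfl [2] (by unfold posl; decide) (by decide)
  have hF1 : F [1] 1 = F [] 1 := by simpa using hdiv 1 le_rfl [] pos0
  have h13 : F [1,3] 1 = -1 := by
    have h := hdiv 1 le_rfl [3] (by unfold posl; decide)
    rw [h, h31]; ring
  have h31' : F [3,1] 1 = -1 := by
    rw [hsym 1 le_rfl [3,1] [1,3] (by unfold posl; decide) (by decide), h13]
  have h22 : F [2,2] 1 = -1 := by
    have h := hR2 1 le_rfl 2 1 [] (by unfold posl; decide) (by decide)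
    unfold R2 at h
    rw [pH1, pS1] at h
    simpa [h31'] using h
  have h41 : F [4,1] 2 = 0 :=
    hbig 2 (by norm_num) [4,1] (by unfold posl; decide) ⟨4, by decide, le_rfl⟩
  have huniv0 : (Finset.univ : Finset (Finset (Fin 0))) = {∅} := by decide
  have huniv1 : (Finset.univ : Finset (Finset (Fin 1))) = {∅, {0}} := by decide
  have e0 : ((∅ : Finset (Fin 0))ᶜ) = ∅ := by decide
  have e1 : ((∅ : Finset (Fin 1))ᶜ) = {0} := by decide
  have e2 : (({0} : Finset (Fin 1))ᶜ) = ∅ := by decide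
  have sE : ∀ (m : List ℕ), subt m (∅ : Finset (Fin m.length)) = [] := by
    intro m; simp [subt]
  have s1 : subt [2] ({0} : Finset (Fin 1)) = [2] := by simp [subt]
  have hA : F [3,2] 2 = -F [] 1 := by
    have h := hR2 2 (by norm_num) 3 1 [] (by unfold posl; decide) (by decide)
    unfold R2 at h
    rw [pH2, pS2, Finset.sum_empty, Finset.sum_singleton] at h
    rw [huniv0, Finset.sum_singleton, e0, sE] at h
    rw [show binom (kd 2 [3,1] - 1) (kd 1 [3]) = 1 from by decide,
      show binom (kd 2 [3,1] - 1) (kd 1 [1]) = 0 from by decide, h41] at h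
    norm_num [h31, hF1] at h
    linarith [h]
  have hB : F [3,2] 2 = -2 + F [] 1 := by
    have h := hR1 2 (by norm_num) 2 [2] (by unfold posl; decide) (by decide)
    unfold R1 at h
    rw [pH2, pS2, Finset.sum_empty, Finset.sum_singleton] at h
    rw [huniv1, Finset.sum_insert (by decide), Finset.sum_singleton, e1, e2, sE, s1] at h
    rw [show TP3 C 2 [2,2] = -2 * C [2,2,3] 1 from by norm_num [TP3, kd]] at h
    rw [show binom (kd 2 [2,2] - 2) (kd 1 [2] - 1) = 1 from by decide,
      show binom (kd 2 [2,2] - 2) (kd 1 [2]) = 0 from by decide,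
      show binom (kd 2 [2,2] - 2) (kd 1 [2,2] - 1) = 0 from by decide,
      show binom (kd 2 [2,2] - 2) (kd 1 [2,2]) = 1 from by decide] at h
    norm_num [hC, h2, h22] at h
    linarith [h]
  have hu : F [] 1 = 1 := by linarith [hA, hB]
  exact ⟨h2, h22, h31', hu⟩
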